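/- Let P be a monic real polynomial of degree d and 0 ≤ r ≤ d. Then (−1)^{d+r} P(x) > 0 for every x in the open interval U_{d,r+1}(P) = (ρ_{d,r}(P), ρ_{d,r+1}(P)), whenever this interval is nonempty. In particular P has a fixed, alternating sign between consecutive virtual roots, just as a hyperbolic polynomial does between its actual roots. -/

import Mathlib

open Polynomial Set

noncomputable def monicPoly (d : ℕ) (c : Fin d → ℝ) : Polynomial ℝ :=
  X ^ d + ∑ i : Fin d, C (c i) * X ^ (i : ℕ)

noncomputable def dCoeff {d : ℕ} (c : Fin (d + 1) → ℝ) : Fin d → ℝ :=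
  fun i => c i.succ * ((i : ℕ) + 1) / (d + 1)

noncomputable def bnd {d : ℕ} (c : Fin d → ℝ) : ℝ := 1 + ⨆ i, |c i|

/-- The point of `[a,b]` where `|P|` attains its minimum. -/
noncomputable def Rmin (a b : ℝ) (P : Polynomial ℝ) : ℝ :=
  if h : a ≤ b then
    (isCompact_Icc.exists_isMinOn (Set.nonempty_Icc.mpr h)
      ((continuous_abs.comp P.continuous).continuousOn)).choose
  else a

/-- The `j`-th virtual root of the monic polynomial with coefficient vector `c`,
defined inductively as the minimizer of `|P|` between consecutive virtual roots
of `P/d`, infinite endpoints being handled by the Cauchy root bound `bnd`. -/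
noncomputable def vroot : (d : ℕ) → ℤ → (Fin d → ℝ) → ℝ
  | 0, _, _ => 0
  | d + 1, j, c =>
    Rmin (if 1 < j then vroot d (j - 1) (dCoeff c) else -(bnd c))
      (if j < (d : ℤ) + 1 then vroot d j (dCoeff c) else bnd c)
      (monicPoly (d + 1) c)


/-- Virtual roots with the conventions `ρ_{d,j} = -∞` for `j ≤ 0` and `+∞` for `j > d`. -/
noncomputable def vrootE (d : ℕ) (j : ℤ) (c : Fin d → ℝ) : EReal :=
  if j ≤ 0 then ⊥ else if (d : ℤ) < j then ⊤ else ((vroot d j c : ℝ) : EReal)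

lemma sup_abs_nonneg {d : ℕ} (c : Fin d → ℝ) : 0 ≤ ⨆ i, |c i| := by
  rcases isEmpty_or_nonempty (Fin d) with h | h
  · simp [Real.iSup_of_isEmpty]
  · exact le_ciSup_of_le (Set.Finite.bddAbove (Set.finite_range _)) (Classical.arbitrary _)
      (abs_nonneg _)

lemma one_le_bnd {d : ℕ} (c : Fin d → ℝ) : 1 ≤ bnd c := by
  have := sup_abs_nonneg c; simp [bnd]; linarith

lemma abs_le_sup {d : ℕ} (c : Fin d → ℝ) (i : Fin d) : |c i| ≤ ⨆ i, |c i| :=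
  le_ciSup (Set.Finite.bddAbove (Set.finite_range (fun i => |c i|))) i

lemma bnd_dCoeff_le {d : ℕ} (c : Fin (d + 1) → ℝ) : bnd (dCoeff c) ≤ bnd c := by
  unfold bnd
  have h : ∀ i : Fin d, |dCoeff c i| ≤ ⨆ i, |c i| := by
    intro i
    have h1 : |dCoeff c i| ≤ |c i.succ| := by
      rw [dCoeff, abs_div, abs_mul]
      rw [abs_of_nonneg (by positivity : (0:ℝ) ≤ (i:ℕ) + 1),
        abs_of_nonneg (by positivity : (0:ℝ) ≤ (d:ℝ) + 1)]
      rw [div_le_iff₀ (by positivity)]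
      have : ((i:ℕ) : ℝ) + 1 ≤ (d:ℝ) + 1 := by
        have := i.isLt; exact_mod_cast by omega
      nlinarith [abs_nonneg (c i.succ)]
    exact h1.trans (abs_le_sup c i.succ)
  gcongr
  rcases isEmpty_or_nonempty (Fin d) with hd | hd
  · simp [Real.iSup_of_isEmpty]; exact sup_abs_nonneg c
  · exact ciSup_le h

lemma eval_monicPoly (d : ℕ) (c : Fin d → ℝ) (x : ℝ) :
    (monicPoly d c).eval x = x ^ d + ∑ i : Fin d, c i * x ^ (i : ℕ) := by
  simp [monicPoly, eval_finset_sum]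

lemma abs_sum_le {d : ℕ} (c : Fin d → ℝ) {x : ℝ} (hx : bnd c ≤ |x|) :
    |∑ i : Fin d, c i * x ^ (i : ℕ)| ≤ |x| ^ d - 1 := by
  have hM : 0 ≤ ⨆ i, |c i| := sup_abs_nonneg c
  have h1 : (1:ℝ) ≤ |x| := le_trans (by simp [bnd] at hx ⊢; linarith) le_rfl
  have hx' : 1 + (⨆ i, |c i|) ≤ |x| := hx
  calc |∑ i : Fin d, c i * x ^ (i : ℕ)| ≤ ∑ i : Fin d, |c i * x ^ (i : ℕ)| :=
        Finset.abs_sum_le_sum_abs _ _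
    _ ≤ ∑ i : Fin d, (|x| - 1) * |x| ^ (i : ℕ) := by
        apply Finset.sum_le_sum
        intro i _
        rw [abs_mul, abs_pow]
        have : |c i| ≤ |x| - 1 := le_trans (abs_le_sup c i) (by linarith)
        gcongr
    _ = (∑ i ∈ Finset.range d, |x| ^ i) * (|x| - 1) := by
        rw [← Fin.sum_univ_eq_sum_range (fun i => |x| ^ i) d, Finset.sum_mul]
        exact Finset.sum_congr rfl (fun i _ => by ring)
    _ = |x| ^ d - 1 := geom_sum_mul _ _

lemma cauchy_pos {d : ℕ} (c : Fin d → ℝ) {x : ℝ} (hx : bnd c ≤ x) :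
    0 < (monicPoly d c).eval x := by
  have h1 : (1:ℝ) ≤ x := (one_le_bnd c).trans hx
  have hax : |x| = x := abs_of_nonneg (by linarith)
  have hb := abs_sum_le c (x := x) (by rwa [hax])
  rw [hax] at hb
  have := neg_abs_le (∑ i : Fin d, c i * x ^ (i : ℕ))
  rw [eval_monicPoly]
  linarith

lemma cauchy_neg {d : ℕ} (c : Fin d → ℝ) {x : ℝ} (hx : x ≤ -(bnd c)) :
    0 < (-1 : ℝ) ^ d * (monicPoly d c).eval x := by
  have h1 : (1:ℝ) ≤ bnd c := one_le_bnd c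
  have hax : |x| = -x := abs_of_nonpos (by linarith)
  have hb := abs_sum_le c (x := x) (by rw [hax]; linarith)
  rw [eval_monicPoly, mul_add]
  have hxd : (-1 : ℝ) ^ d * x ^ d = |x| ^ d := by
    rw [hax, ← neg_pow]
  have h2 : -( |x| ^ d - 1) ≤ (-1 : ℝ) ^ d * ∑ i : Fin d, c i * x ^ (i : ℕ) := by
    have := neg_abs_le ((-1 : ℝ) ^ d * ∑ i : Fin d, c i * x ^ (i : ℕ))
    have habs : |(-1 : ℝ) ^ d * ∑ i : Fin d, c i * x ^ (i : ℕ)|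
        = |∑ i : Fin d, c i * x ^ (i : ℕ)| := by
      rw [abs_mul, abs_pow, abs_neg, abs_one, one_pow, one_mul]
    rw [habs] at this
    linarith
  rw [hxd]
  linarith

lemma deriv_monicPoly (d : ℕ) (c : Fin (d + 1) → ℝ) :
    (monicPoly (d + 1) c).derivative = C ((d : ℝ) + 1) * monicPoly d (dCoeff c) := by
  unfold monicPoly
  rw [derivative_add, derivative_X_pow, derivative_sum]
  rw [mul_add]
  congr 1
  · norm_num
  · rw [Finset.mul_sum]
    rw [Fin.sum_univ_succ]
    simp only [Polynomial.derivative_C_mul_X_pow]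
    simp only [Fin.val_zero, Nat.cast_zero, mul_zero, map_zero, zero_mul, zero_add]
    apply Finset.sum_congr rfl
    intro i _
    rw [← mul_assoc, ← C_mul]
    have h1 : (↑(i.succ) : ℕ) - 1 = (i : ℕ) := by simp
    rw [h1]
    congr 1
    unfold dCoeff
    have hd : ((d:ℝ) + 1) ≠ 0 := by positivity
    field_simp
    simp [Fin.val_succ]

lemma Rmin_mem {a b : ℝ} (h : a ≤ b) (P : Polynomial ℝ) : Rmin a b P ∈ Icc a b := by
  rw [Rmin, dif_pos h]
  exact (isCompact_Icc.exists_isMinOn (Set.nonempty_Icc.mpr h)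
      ((continuous_abs.comp P.continuous).continuousOn)).choose_spec.1

lemma Rmin_min {a b : ℝ} (h : a ≤ b) (P : Polynomial ℝ) {y : ℝ} (hy : y ∈ Icc a b) :
    |P.eval (Rmin a b P)| ≤ |P.eval y| := by
  rw [Rmin, dif_pos h]
  exact (isCompact_Icc.exists_isMinOn (Set.nonempty_Icc.mpr h)
      ((continuous_abs.comp P.continuous).continuousOn)).choose_spec.2 hy

lemma min_right_pos {f : ℝ → ℝ} {s : Set ℝ} {t x : ℝ} (ht : t ∈ s) (hx : x ∈ s)
    (hmin : ∀ y ∈ s, |f t| ≤ |f y|) (hmono : StrictMonoOn f s) (hlt : t < x) : 0 < f x := by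
  have h1 : f t < f x := hmono ht hx hlt
  by_contra h
  push_neg at h
  have h2 := hmin x hx
  have hft : f t < 0 := lt_of_lt_of_le h1 h
  rw [abs_of_neg hft, abs_of_nonpos h] at h2
  linarith

lemma min_left_neg {f : ℝ → ℝ} {s : Set ℝ} {t x : ℝ} (ht : t ∈ s) (hx : x ∈ s)
    (hmin : ∀ y ∈ s, |f t| ≤ |f y|) (hmono : StrictMonoOn f s) (hlt : x < t) : f x < 0 := by
  have h1 : f x < f t := hmono hx ht hlt
  by_contra h
  push_neg at h
  have h2 := hmin x hx
  have hft : 0 < f t := lt_of_le_of_lt h h1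
  rw [abs_of_pos hft, abs_of_nonneg h] at h2
  linarith

lemma vrootE_eq {d : ℕ} {j : ℤ} (c : Fin d → ℝ) (h1 : 1 ≤ j) (h2 : j ≤ (d:ℤ)) :
    vrootE d j c = ((vroot d j c : ℝ) : EReal) := by
  rw [vrootE, if_neg (by omega), if_neg (by omega)]

theorem main_ind : ∀ d : ℕ, ∀ c : Fin d → ℝ,
    (∀ j : ℤ, 1 ≤ j → j ≤ (d:ℤ) →
      -(bnd c) ≤ vroot d j c ∧ vroot d j c ≤ bnd c) ∧
    (∀ j : ℤ, 1 ≤ j → j + 1 ≤ (d:ℤ) → vroot d j c ≤ vroot d (j+1) c) ∧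
    (∀ r : ℕ, r ≤ d → ∀ x : ℝ, vrootE d (r:ℤ) c < (x:EReal) →
      (x:EReal) < vrootE d ((r:ℤ)+1) c →
      0 < (-1:ℝ)^(d+r) * (monicPoly d c).eval x) := by
  intro d
  induction d with
  | zero =>
    intro c
    refine ⟨by intro j h1 h2; omega, by intro j h1 h2; omega, ?_⟩
    intro r hr x _ _
    interval_cases r
    simp [monicPoly]
  | succ d IH =>
    intro c
    obtain ⟨IH1, IH2, IH3⟩ := IH (dCoeff c)
    set c' := dCoeff c with hc'
    set B := bnd c with hBdef
    set P := monicPoly (d+1) c with hPdef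
    set Q := monicPoly d c' with hQdef
    have hB1 : (1:ℝ) ≤ B := one_le_bnd c
    have hB' : bnd c' ≤ B := bnd_dCoeff_le c
    set a : ℤ → ℝ := fun j => if j ≤ 0 then -B else if (d:ℤ) < j then B else vroot d j c'
      with ha
    have ha_mem : ∀ j : ℤ, -B ≤ a j ∧ a j ≤ B := by
      intro j
      simp only [ha]
      split_ifs with h1 h2
      · constructor <;> linarith
      · constructor <;> linarith
      · have := IH1 j (by omega) (by omega)
        constructor <;> linarith [this.1, this.2]
    have ha_step : ∀ j : ℤ, a j ≤ a (j+1) := by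
      intro j
      by_cases h1 : j ≤ 0
      · have : a j = -B := by simp only [ha]; rw [if_pos h1]
        rw [this]
        exact (ha_mem (j+1)).1
      · by_cases h2 : (d:ℤ) < j
        · have hj : a j = B := by simp only [ha]; rw [if_neg h1, if_pos h2]
          have hj1 : a (j+1) = B := by simp only [ha]; rw [if_neg (by omega), if_pos (by omega)]
          rw [hj, hj1]
        · have hj : a j = vroot d j c' := by simp only [ha]; rw [if_neg h1, if_neg h2]
          by_cases h3 : (d:ℤ) < j + 1
          · have hj1 : a (j+1) = B := by simp only [ha]; rw [if_neg (by omega), if_pos h3]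
            rw [hj, hj1]
            have := IH1 j (by omega) (by omega)
            linarith [this.2]
          · have hj1 : a (j+1) = vroot d (j+1) c' := by
              simp only [ha]; rw [if_neg (by omega), if_neg h3]
            rw [hj, hj1]
            exact IH2 j (by omega) (by omega)
    have hvr : ∀ j : ℤ, 1 ≤ j → j ≤ (d:ℤ)+1 → vroot (d+1) j c = Rmin (a (j-1)) (a j) P := by
      intro j h1 h2
      rw [vroot]
      congr 1
      · split_ifs with h3
        · simp only [ha]; rw [if_neg (by omega), if_neg (by omega)]
        · simp only [ha]; rw [if_pos (by omega)]
      · split_ifs with h3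
        · simp only [ha]; rw [if_neg (by omega), if_neg (by omega)]
        · simp only [ha]; rw [if_neg (by omega), if_pos (by omega)]
    have hQ : ∀ j : ℤ, 1 ≤ j → j ≤ (d:ℤ)+1 → ∀ y : ℝ, a (j-1) < y → y < a j →
        0 < (-1:ℝ)^(d + (j-1).toNat) * Q.eval y := by
      intro j h1 h2 y hy1 hy2
      apply IH3 (j-1).toNat (by omega) y
      · rw [vrootE]
        split_ifs with h3 h4
        · exact EReal.bot_lt_coe y
        · omega
        · rw [EReal.coe_lt_coe_iff]
          have heq : a (j-1) = vroot d ((j-1).toNat : ℤ) c' := by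
            simp only [ha]; rw [if_neg (by omega), if_neg (by omega)]
            congr 1
            omega
          rw [← heq]
          exact hy1
      · rw [vrootE]
        split_ifs with h3 h4
        · omega
        · exact EReal.coe_lt_top y
        · rw [EReal.coe_lt_coe_iff]
          have heq : a j = vroot d (((j-1).toNat : ℤ) + 1) c' := by
            simp only [ha]; rw [if_neg (by omega), if_neg (by omega)]
            congr 1
            omega
          rw [← heq]
          exact hy2
    have key : ∀ j : ℤ, 1 ≤ j → j ≤ (d:ℤ)+1 → ∀ x : ℝ,
        (vroot (d+1) j c < x → x ≤ a j → 0 < (-1:ℝ)^(d + (j-1).toNat) * P.eval x) ∧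
        (a (j-1) ≤ x → x < vroot (d+1) j c →
          0 < (-1:ℝ)^(d + (j-1).toNat + 1) * P.eval x) := by
      intro j h1 h2 x
      have hab : a (j-1) ≤ a j := by
        have := ha_step (j-1)
        rwa [sub_add_cancel] at this
      rw [hvr j h1 h2]
      set t := Rmin (a (j-1)) (a j) P with htdef
      have htm := Rmin_mem hab P
      have htmin : ∀ y ∈ Set.Icc (a (j-1)) (a j), |P.eval t| ≤ |P.eval y| :=
        fun y hy => Rmin_min hab P hy
      have hcont : ContinuousOn (fun y => P.eval y) (Set.Icc (a (j-1)) (a j)) :=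
        (P.continuous).continuousOn
      have hderiv : ∀ y : ℝ, deriv (fun z => P.eval z) y = ((d:ℝ)+1) * Q.eval y := by
        intro y
        rw [Polynomial.deriv, hPdef, deriv_monicPoly]
        simp [hQdef, hc']
      rcases Nat.even_or_odd (d + (j-1).toNat) with he | ho
      · have hmono : StrictMonoOn (fun y => P.eval y) (Set.Icc (a (j-1)) (a j)) := by
          apply strictMonoOn_of_deriv_pos (convex_Icc _ _) hcont
          intro y hy
          rw [interior_Icc] at hy
          rw [hderiv]
          have hq := hQ j h1 h2 y hy.1 hy.2
          rw [he.neg_one_pow, one_mul] at hq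
          positivity
        constructor
        · intro hx1 hx2
          have hxm : x ∈ Set.Icc (a (j-1)) (a j) := ⟨le_trans htm.1 hx1.le, hx2⟩
          have := min_right_pos htm hxm htmin hmono hx1
          rw [he.neg_one_pow, one_mul]
          exact this
        · intro hx1 hx2
          have hxm : x ∈ Set.Icc (a (j-1)) (a j) := ⟨hx1, le_trans hx2.le htm.2⟩
          have := min_left_neg htm hxm htmin hmono hx2
          rw [(he.add_one).neg_one_pow]
          linarith
      · have hQneg : ∀ y : ℝ, a (j-1) < y → y < a j → Q.eval y < 0 := by
          intro y hy1 hy2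
          have hq := hQ j h1 h2 y hy1 hy2
          rw [ho.neg_one_pow] at hq
          linarith
        have hmono : StrictMonoOn (fun y => -(P.eval y)) (Set.Icc (a (j-1)) (a j)) := by
          apply strictMonoOn_of_deriv_pos (convex_Icc _ _) hcont.neg
          intro y hy
          rw [interior_Icc] at hy
          have hd : deriv (fun z => -(P.eval z)) y = -(((d:ℝ)+1) * Q.eval y) := by
            rw [← hderiv y]
            exact deriv.fun_neg
          change 0 < deriv (fun z => -(P.eval z)) y
          rw [hd]
          have := hQneg y hy.1 hy.2
          have h5 : 0 < ((d:ℝ)+1) * (-(Q.eval y)) := by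
            apply mul_pos (by positivity)
            linarith
          linarith
        have htmin' : ∀ y ∈ Set.Icc (a (j-1)) (a j),
            |-(P.eval t)| ≤ |-(P.eval y)| := by
          intro y hy
          rw [abs_neg, abs_neg]
          exact htmin y hy
        constructor
        · intro hx1 hx2
          have hxm : x ∈ Set.Icc (a (j-1)) (a j) := ⟨le_trans htm.1 hx1.le, hx2⟩
          have := min_right_pos (f := fun y => -(P.eval y)) htm hxm htmin' hmono hx1
          rw [ho.neg_one_pow]
          linarith
        · intro hx1 hx2
          have hxm : x ∈ Set.Icc (a (j-1)) (a j) := ⟨hx1, le_trans hx2.le htm.2⟩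
          have := min_left_neg (f := fun y => -(P.eval y)) htm hxm htmin' hmono hx2
          rw [(ho.add_one).neg_one_pow, one_mul]
          linarith
    refine ⟨?_, ?_, ?_⟩
    · intro j h1 h2
      rw [hvr j h1 (by push_cast at h2 ⊢; omega)]
      have hab : a (j-1) ≤ a j := by
        have := ha_step (j-1); rwa [sub_add_cancel] at this
      have ht := Rmin_mem hab P
      exact ⟨le_trans (ha_mem (j-1)).1 ht.1, le_trans ht.2 (ha_mem j).2⟩
    · intro j h1 h2
      rw [hvr j h1 (by push_cast at h2 ⊢; omega), hvr (j+1) (by omega) (by push_cast at h2 ⊢; omega)]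
      have hab : a (j-1) ≤ a j := by
        have := ha_step (j-1); rwa [sub_add_cancel] at this
      rw [show (j:ℤ)+1-1 = j by ring]
      have hab' : a j ≤ a (j+1) := ha_step j
      have ht := Rmin_mem hab P
      have ht' := Rmin_mem hab' P
      exact le_trans ht.2 ht'.1
    · intro r hr x hx1 hx2
      by_cases hr0 : r = 0
      · subst hr0
        rw [show ((0:ℕ):ℤ) + 1 = (1:ℤ) by norm_num] at hx2
        rw [vrootE_eq c (by omega) (by push_cast; omega)] at hx2
        rw [EReal.coe_lt_coe_iff] at hx2
        by_cases hxB : -B ≤ x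
        · have h0 : a 0 = -B := by simp only [ha]; rw [if_pos (by omega)]
          have hk := (key 1 (by omega) (by omega) x).2
            (by rw [show (1:ℤ)-1 = 0 by norm_num, h0]; exact hxB) hx2
          have hE : d + ((1:ℤ)-1).toNat + 1 = d + 1 + 0 := by norm_num
          rw [hE] at hk
          exact hk
        · push_neg at hxB
          have := cauchy_neg c (x := x) (by linarith)
          have hexp : (-1:ℝ)^(d+1+0) = (-1:ℝ)^(d+1) := by norm_num
          rw [hexp]
          exact this
      · by_cases hrd : r = d + 1
        · subst hrd
          rw [vrootE_eq c (by omega) (by push_cast; omega)] at hx1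
          rw [EReal.coe_lt_coe_iff] at hx1
          have heven : Even (d + 1 + (d + 1)) := ⟨d+1, rfl⟩
          rw [heven.neg_one_pow, one_mul]
          by_cases hxB : x ≤ B
          · have hjc : (((d:ℕ)+1 : ℕ) : ℤ) = (d:ℤ)+1 := by push_cast; ring
            have haj : a ((d:ℤ)+1) = B := by
              simp only [ha]; rw [if_neg (by omega), if_pos (by omega)]
            push_cast at hx1
            have hk := (key ((d:ℤ)+1) (by omega) (by omega) x).1 hx1
              (by rw [haj]; exact hxB)
            have he2 : Even (d + (((d:ℤ)+1) - 1).toNat) := by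
              have : (((d:ℤ)+1) - 1).toNat = d := by omega
              rw [this]
              exact ⟨d, rfl⟩
            rw [he2.neg_one_pow, one_mul] at hk
            exact hk
          · push_neg at hxB
            exact cauchy_pos c (x := x) (by linarith)
        · -- 1 ≤ r ≤ d
          have hr1 : 1 ≤ r := by omega
          have hrd' : r ≤ d := by omega
          rw [vrootE_eq c (by omega) (by push_cast; omega)] at hx1
          rw [vrootE_eq c (by omega) (by push_cast; omega)] at hx2
          rw [EReal.coe_lt_coe_iff] at hx1 hx2
          by_cases hxa : x ≤ a (r:ℤ)
          · have hk := (key (r:ℤ) (by omega) (by omega) x).1 hx1 hxa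
            have hexp : (-1:ℝ)^(d+1+r) = (-1:ℝ)^(d + ((r:ℤ)-1).toNat) := by
              have h5 : d+1+r = d + ((r:ℤ)-1).toNat + 2 := by omega
              rw [h5, pow_add]
              norm_num
            rw [hexp]
            exact hk
          · push_neg at hxa
            have hk := (key ((r:ℤ)+1) (by omega) (by omega) x).2
              (by rw [show (r:ℤ)+1-1 = (r:ℤ) by ring]; exact hxa.le) hx2
            have hexp : d + (((r:ℤ)+1)-1).toNat + 1 = d+1+r := by omega
            rw [hexp] at hk
            exact hk


/-- a monic polynomial of degree `d` has the fixed sign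
`(-1)^{d+r}` on the open interval `U_{d,r+1}(P) = (ρ_{d,r}(P), ρ_{d,r+1}(P))`
(with the conventions `ρ_{d,0} = -∞`, `ρ_{d,d+1} = +∞`). -/
theorem sign_between_virtual_roots (d : ℕ) (c : Fin d → ℝ) (r : ℕ) (hr : r ≤ d)
    (x : ℝ) (hx1 : vrootE d (r : ℤ) c < (x : EReal))
    (hx2 : (x : EReal) < vrootE d ((r : ℤ) + 1) c) :
    0 < (-1 : ℝ) ^ (d + r) * (monicPoly d c).eval x :=
  (main_ind d c).2.2 r hr x hx1 hx2
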